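/- Let θ ∈ (0, π/2), ξ ∈ (0, π/4], and b ∈ {+1, −1}, and let φ := (1 ⊗ₖ M_b(ξ)).mulVec ψ(θ). Then there exist 2×2 unitary matrices U, V and an angle θ' ∈ (0, π/4] such that φ/‖φ‖ = (U ⊗ₖ V).mulVec ψ(θ'); i.e. the normalized post-measurement state is, up to local unitaries depending on the outcome b and on θ and ξ, again a state of the Schmidt form cos(θ')|00⟩ + sin(θ')|11⟩ with Schmidt angle θ' in (0, π/4]. -/

import Mathlib

set_option maxHeartbeats 1000000

noncomputable section

open Matrix Kronecker

/-- The two-qubit state ψ(θ) = cos θ |00⟩ + sin θ |11⟩. -/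
def psiState (θ : ℝ) : Fin 2 × Fin 2 → ℂ := fun p =>
  if p = (0, 0) then (Real.cos θ : ℂ)
  else if p = (1, 1) then (Real.sin θ : ℂ) else 0

/-- |+⟩ = (|0⟩ + |1⟩)/√2. -/
def ketPlus : Fin 2 → ℂ := ![(Real.sqrt 2 : ℂ)⁻¹, (Real.sqrt 2 : ℂ)⁻¹]

/-- |−⟩ = (|0⟩ − |1⟩)/√2. -/
def ketMinus : Fin 2 → ℂ := ![(Real.sqrt 2 : ℂ)⁻¹, -(Real.sqrt 2 : ℂ)⁻¹]

/-- Projector |+⟩⟨+|. -/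
def projPlus : Matrix (Fin 2) (Fin 2) ℂ := vecMulVec ketPlus (star ketPlus)

/-- Projector |−⟩⟨−|. -/
def projMinus : Matrix (Fin 2) (Fin 2) ℂ := vecMulVec ketMinus (star ketMinus)

/-- Kraus operators of the weak measurement σ̂x(ξ):
`M ξ 1 = cos ξ |+⟩⟨+| + sin ξ |−⟩⟨−|` and `M ξ (-1) = cos ξ |−⟩⟨−| + sin ξ |+⟩⟨+|`. -/
def krausM (ξ : ℝ) (b : ℤ) : Matrix (Fin 2) (Fin 2) ℂ :=
  if b = 1 then (Real.cos ξ : ℂ) • projPlus + (Real.sin ξ : ℂ) • projMinus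
  else (Real.cos ξ : ℂ) • projMinus + (Real.sin ξ : ℂ) • projPlus

open Real in
lemma rot_unitary (x y : ℝ) (h : x^2 + y^2 = 1) :
    !![(x:ℂ), (y:ℂ); -(y:ℂ), (x:ℂ)] ∈ Matrix.unitaryGroup (Fin 2) ℂ := by
  rw [Matrix.mem_unitaryGroup_iff]
  ext i j
  fin_cases i <;> fin_cases j <;>
    simp [Matrix.mul_apply, Fin.sum_univ_two, Matrix.one_apply, Complex.conj_ofReal,
      Matrix.star_apply] <;> (try ring) <;> norm_cast <;> nlinarith [h]

open Real in
lemma key_svd (ct st c s d : ℝ) (X : Fin 2 × Fin 2 → ℂ)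
    (hX00 : X (0,0) = ((ct*(c+s)/2 : ℝ) : ℂ)) (hX01 : X (0,1) = ((ct*d/2 : ℝ) : ℂ))
    (hX10 : X (1,0) = ((st*d/2 : ℝ) : ℂ)) (hX11 : X (1,1) = ((st*(c+s)/2 : ℝ) : ℂ))
    (h1 : ct^2 + st^2 = 1) (h2 : c^2 + s^2 = 1) (hd : d^2 = 1 - 2*c*s)
    (hw0 : 0 < 4*c*s*ct*st) (hw1 : 4*c*s*ct*st ≤ 1) :
    ∃ (U V : Matrix (Fin 2) (Fin 2) ℂ) (θ' : ℝ),
      U ∈ Matrix.unitaryGroup (Fin 2) ℂ ∧ V ∈ Matrix.unitaryGroup (Fin 2) ℂ ∧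
      θ' ∈ Set.Ioc 0 (Real.pi / 4) ∧
      ((Real.sqrt 2 : ℝ) : ℂ) • X = (U ⊗ₖ V).mulVec (psiState θ') := by
  set w : ℝ := 4*c*s*ct*st with hw
  set θ' : ℝ := Real.arcsin w / 2 with hθ'
  have hwm1 : -1 ≤ w := by linarith
  have harcpos : 0 < Real.arcsin w := Real.arcsin_pos.2 hw0
  have harcle : Real.arcsin w ≤ π / 2 := Real.arcsin_le_pi_div_two w
  have hθ'mem : θ' ∈ Set.Ioc 0 (π / 4) := ⟨by positivity, by rw [hθ']; linarith⟩
  set l1 : ℝ := Real.cos θ' with hl1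
  set l2 : ℝ := Real.sin θ' with hl2
  have hθ'lt : θ' < π / 2 := lt_of_le_of_lt hθ'mem.2 (by linarith [Real.pi_pos])
  have hl1pos : 0 < l1 := Real.cos_pos_of_mem_Ioo ⟨by linarith [hθ'mem.1, Real.pi_pos], hθ'lt⟩
  have hl2pos : 0 < l2 := Real.sin_pos_of_pos_of_lt_pi hθ'mem.1 (by linarith [Real.pi_pos])
  have hpyth : l1^2 + l2^2 = 1 := by rw [hl1, hl2]; rw [add_comm]; exact Real.sin_sq_add_cos_sq θ'
  have hsin2 : 2 * l1 * l2 = w := by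
    have : Real.sin (2 * θ') = w := by
      rw [show 2 * θ' = Real.arcsin w by rw [hθ']; ring]
      exact Real.sin_arcsin hwm1 hw1
    rw [Real.sin_two_mul] at this
    rw [hl1, hl2]; linarith
  have hl12 : l2 ≤ l1 := by
    have h4 : Real.cos (θ' + π/4) = (Real.sqrt 2 / 2) * (l1 - l2) := by
      rw [Real.cos_add, Real.cos_pi_div_four, Real.sin_pi_div_four, hl1, hl2]; ring
    have h5 : 0 ≤ Real.cos (θ' + π/4) :=
      Real.cos_nonneg_of_mem_Icc ⟨by linarith [hθ'mem.1, Real.pi_pos], by linarith [hθ'mem.2]⟩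
    nlinarith [Real.sqrt_pos.2 (by norm_num : (0:ℝ) < 2)]
  set k : ℝ := Real.sqrt 2 with hk
  have hk2 : k^2 = 2 := Real.sq_sqrt (by norm_num)
  have hEH : (k/4*(c+s)*(ct+st))^2 + (k/4*d*(st-ct))^2 = ((l1+l2)/2)^2 := by
    linear_combination (((c+s)^2*(ct+st)^2 + d^2*(st-ct)^2)/16) * hk2 +
      ((st-ct)^2/8) * hd + ((ct+st)^2/8) * h2 + (1/4) * h1 +
      (-1/4)*hpyth + (-1/4)*hsin2
  have hFG : (k/4*(c+s)*(ct-st))^2 + (k/4*d*(ct+st))^2 = ((l1-l2)/2)^2 := by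
    linear_combination (((c+s)^2*(ct-st)^2 + d^2*(ct+st)^2)/16) * hk2 +
      ((ct+st)^2/8) * hd + ((ct-st)^2/8) * h2 + (1/4) * h1 +
      (-1/4)*hpyth + (1/4)*hsin2
  have hQpos : 0 < (l1+l2)/2 := by linarith
  -- extract angle a2
  obtain ⟨a2, hE2, hH2⟩ : ∃ a2 : ℝ, k/4*(c+s)*(ct+st) = (l1+l2)/2 * Real.cos a2 ∧
      k/4*d*(st-ct) = (l1+l2)/2 * Real.sin a2 := by
    set z : ℂ := ⟨k/4*(c+s)*(ct+st), k/4*d*(st-ct)⟩ with hz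
    have habs : ‖z‖ = (l1+l2)/2 := by
      rw [Complex.norm_def, hz, Complex.normSq_mk]
      rw [show k/4*(c+s)*(ct+st) * (k/4*(c+s)*(ct+st)) + k/4*d*(st-ct) * (k/4*d*(st-ct))
            = ((l1+l2)/2)^2 by linear_combination hEH]
      exact Real.sqrt_sq hQpos.le
    have hz0 : z ≠ 0 := by
      intro h0; rw [h0] at habs; simp at habs; linarith
    refine ⟨Complex.arg z, ?_, ?_⟩
    · have := Complex.cos_arg hz0
      rw [habs] at this
      rw [this, hz]; field_simp
    · have := Complex.sin_arg z
      rw [habs] at this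
      rw [this, hz]; field_simp
  -- extract angle a1
  obtain ⟨a1, hF2, hG2⟩ : ∃ a1 : ℝ, k/4*(c+s)*(ct-st) = (l1-l2)/2 * Real.cos a1 ∧
      k/4*d*(ct+st) = (l1-l2)/2 * Real.sin a1 := by
    rcases eq_or_lt_of_le hl12 with hRz | hRlt
    · have hsum : (k/4*(c+s)*(ct-st))^2 + (k/4*d*(ct+st))^2 = 0 := by
        rw [hFG, ← hRz]; ring
      have hF0 : k/4*(c+s)*(ct-st) = 0 := by
        have h1' := sq_nonneg (k/4*(c+s)*(ct-st)); have h2' := sq_nonneg (k/4*d*(ct+st))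
        have h3' : (k/4*(c+s)*(ct-st))^2 = 0 := by linarith
        exact pow_eq_zero_iff (two_ne_zero) |>.1 h3'
      have hG0 : k/4*d*(ct+st) = 0 := by
        have h1' := sq_nonneg (k/4*(c+s)*(ct-st)); have h2' := sq_nonneg (k/4*d*(ct+st))
        have h3' : (k/4*d*(ct+st))^2 = 0 := by linarith
        exact pow_eq_zero_iff (two_ne_zero) |>.1 h3'
      exact ⟨0, by rw [hF0, ← hRz]; ring, by rw [hG0, ← hRz]; ring⟩
    · have hRpos : 0 < (l1-l2)/2 := by linarith
      have hne : l1 - l2 ≠ 0 := ne_of_gt (by linarith)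
      set z : ℂ := ⟨k/4*(c+s)*(ct-st), k/4*d*(ct+st)⟩ with hz
      have habs : ‖z‖ = (l1-l2)/2 := by
        rw [Complex.norm_def, hz, Complex.normSq_mk]
        rw [show k/4*(c+s)*(ct-st) * (k/4*(c+s)*(ct-st)) + k/4*d*(ct+st) * (k/4*d*(ct+st))
              = ((l1-l2)/2)^2 by linear_combination hFG]
        exact Real.sqrt_sq hRpos.le
      have hz0 : z ≠ 0 := by
        intro h0; rw [h0] at habs; simp at habs; linarith
      refine ⟨Complex.arg z, ?_, ?_⟩
      · have := Complex.cos_arg hz0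
        rw [habs] at this
        rw [this, hz]; field_simp [hne]
      · have := Complex.sin_arg z
        rw [habs] at this
        rw [this, hz]; field_simp [hne]
  set u : ℝ := (a2+a1)/2 with hu
  set v : ℝ := (a2-a1)/2 with hv
  have hca2 : Real.cos a2 = Real.cos u * Real.cos v - Real.sin u * Real.sin v := by
    rw [show a2 = u + v by rw [hu, hv]; ring, Real.cos_add]
  have hsa2 : Real.sin a2 = Real.sin u * Real.cos v + Real.cos u * Real.sin v := by
    rw [show a2 = u + v by rw [hu, hv]; ring, Real.sin_add]
  have hca1 : Real.cos a1 = Real.cos u * Real.cos v + Real.sin u * Real.sin v := by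
    rw [show a1 = u - v by rw [hu, hv]; ring, Real.cos_sub]
  have hsa1 : Real.sin a1 = Real.sin u * Real.cos v - Real.cos u * Real.sin v := by
    rw [show a1 = u - v by rw [hu, hv]; ring, Real.sin_sub]
  set cu := Real.cos u
  set su := Real.sin u
  set cv := Real.cos v
  set sv := Real.sin v
  have r00 : k*(ct*(c+s)/2) = cu*cv*l1 - su*sv*l2 := by
    linear_combination hE2 + hF2 + ((l1+l2)/2)*hca2 + ((l1-l2)/2)*hca1
  have r01 : k*(ct*d/2) = -(cu*sv*l1) - su*cv*l2 := by
    linear_combination hG2 - hH2 + ((l1-l2)/2)*hsa1 - ((l1+l2)/2)*hsa2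
  have r10 : k*(st*d/2) = su*cv*l1 + cu*sv*l2 := by
    linear_combination hG2 + hH2 + ((l1-l2)/2)*hsa1 + ((l1+l2)/2)*hsa2
  have r11 : k*(st*(c+s)/2) = -(su*sv*l1) + cu*cv*l2 := by
    linear_combination hE2 - hF2 + ((l1+l2)/2)*hca2 - ((l1-l2)/2)*hca1
  have hpu : cu^2 + su^2 = 1 := by
    rw [add_comm]; exact Real.sin_sq_add_cos_sq u
  have hpv : cv^2 + sv^2 = 1 := by
    rw [add_comm]; exact Real.sin_sq_add_cos_sq v
  refine ⟨!![((cu:ℝ):ℂ), ((-su:ℝ):ℂ); -((-su:ℝ):ℂ), ((cu:ℝ):ℂ)],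
         !![((cv:ℝ):ℂ), ((sv:ℝ):ℂ); -((sv:ℝ):ℂ), ((cv:ℝ):ℂ)], θ',
         rot_unitary cu (-su) (by linear_combination hpu),
         rot_unitary cv sv hpv, hθ'mem, ?_⟩
  funext p
  obtain ⟨i, j⟩ := p
  have e00 : psiState θ' (0,0) = ((l1:ℝ):ℂ) := by simp [psiState, hl1]
  have e11 : psiState θ' (1,1) = ((l2:ℝ):ℂ) := by simp [psiState, hl2]
  have e01 : psiState θ' (0,1) = 0 := by simp [psiState]
  have e10 : psiState θ' (1,0) = 0 := by simp [psiState]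
  fin_cases i <;> fin_cases j <;>
    simp only [Pi.smul_apply, smul_eq_mul, Matrix.mulVec, dotProduct,
      Fintype.sum_prod_type, Fin.sum_univ_two, Matrix.kroneckerMap_apply,
      e00, e01, e10, e11, hX00, hX01, hX10, hX11, Matrix.of_apply, Matrix.cons_val',
      Matrix.cons_val_zero, Matrix.cons_val_one, Matrix.head_cons, Matrix.head_fin_const,
      Matrix.empty_val', Matrix.cons_val_fin_one, Fin.zero_eta, Fin.mk_zero, Fin.mk_one,
      Fin.isValue, mul_zero, add_zero, zero_add]
  · push_cast
    norm_cast
    have := congrArg (fun x : ℝ => (x : ℂ)) r00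
    push_cast at this ⊢
    linear_combination this
  · push_cast
    norm_cast
    have := congrArg (fun x : ℝ => (x : ℂ)) r01
    push_cast at this ⊢
    linear_combination this
  · push_cast
    norm_cast
    have := congrArg (fun x : ℝ => (x : ℂ)) r10
    push_cast at this ⊢
    linear_combination this
  · push_cast
    norm_cast
    have := congrArg (fun x : ℝ => (x : ℂ)) r11
    push_cast at this ⊢
    linear_combination this

theorem post_measurement_state_schmidt_form (θ ξ : ℝ)
    (hθ : θ ∈ Set.Ioo 0 (Real.pi / 2)) (hξ : ξ ∈ Set.Ioc 0 (Real.pi / 4))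
    (b : ℤ) (hb : b = 1 ∨ b = -1)
    (φ : Fin 2 × Fin 2 → ℂ)
    (hφ : φ = ((1 : Matrix (Fin 2) (Fin 2) ℂ) ⊗ₖ krausM ξ b).mulVec (psiState θ)) :
    ∃ (U V : Matrix (Fin 2) (Fin 2) ℂ) (θ' : ℝ),
      U ∈ Matrix.unitaryGroup (Fin 2) ℂ ∧ V ∈ Matrix.unitaryGroup (Fin 2) ℂ ∧
      θ' ∈ Set.Ioc 0 (Real.pi / 4) ∧
      ((Real.sqrt ((star φ ⬝ᵥ φ).re) : ℂ))⁻¹ • φ = (U ⊗ₖ V).mulVec (psiState θ') := by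
  obtain ⟨hθ0, hθ1⟩ := hθ
  obtain ⟨hξ0, hξ1⟩ := hξ
  have hπ := Real.pi_pos
  have hct : 0 < Real.cos θ := Real.cos_pos_of_mem_Ioo ⟨by linarith, hθ1⟩
  have hst : 0 < Real.sin θ := Real.sin_pos_of_pos_of_lt_pi hθ0 (by linarith)
  have hc : 0 < Real.cos ξ := Real.cos_pos_of_mem_Ioo ⟨by linarith, by linarith⟩
  have hs : 0 < Real.sin ξ := Real.sin_pos_of_pos_of_lt_pi hξ0 (by linarith)
  have hw0 : 0 < 4 * Real.cos ξ * Real.sin ξ * Real.cos θ * Real.sin θ := by positivity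
  have h1 : Real.cos θ ^ 2 + Real.sin θ ^ 2 = 1 := Real.cos_sq_add_sin_sq θ
  have h2 : Real.cos ξ ^ 2 + Real.sin ξ ^ 2 = 1 := Real.cos_sq_add_sin_sq ξ
  have hw1 : 4 * Real.cos ξ * Real.sin ξ * Real.cos θ * Real.sin θ ≤ 1 := by
    have e1 : 2 * Real.sin ξ * Real.cos ξ ≤ 1 := by
      rw [show 2 * Real.sin ξ * Real.cos ξ = Real.sin (2*ξ) from (Real.sin_two_mul ξ).symm]
      exact Real.sin_le_one _
    have e2 : 2 * Real.sin θ * Real.cos θ ≤ 1 := by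
      rw [show 2 * Real.sin θ * Real.cos θ = Real.sin (2*θ) from (Real.sin_two_mul θ).symm]
      exact Real.sin_le_one _
    nlinarith [mul_pos hc hs, mul_pos hct hst]
  have h22 : ((Real.sqrt 2 : ℝ) : ℂ) * ((Real.sqrt 2 : ℝ) : ℂ) = 2 := by
    rw [← Complex.ofReal_mul, Real.mul_self_sqrt] <;> norm_num
  have h20 : ((Real.sqrt 2 : ℝ) : ℂ) ≠ 0 := by
    simpa using Real.sqrt_ne_zero'.2 (by norm_num : (0:ℝ) < 2)
  rcases hb with rfl | rfl
  · -- b = 1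
    have hφ00 : φ (0,0) = ((Real.cos θ * (Real.cos ξ + Real.sin ξ) / 2 : ℝ) : ℂ) := by
      rw [hφ]
      simp [krausM, projPlus, projMinus, ketPlus, ketMinus, Matrix.vecMulVec_apply,
        Matrix.mulVec, dotProduct, Fintype.sum_prod_type, Fin.sum_univ_two, psiState,
        Matrix.one_apply, Matrix.kroneckerMap_apply, Matrix.add_apply, Matrix.smul_apply,
        smul_eq_mul, Complex.conj_ofReal, map_inv₀, Pi.star_apply, Matrix.vecMulVec]
      field_simp
      simp only [← Complex.ofReal_cos, ← Complex.ofReal_sin]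
      linear_combination (-((Real.cos θ : ℂ)) * ((Real.cos ξ : ℂ) + (Real.sin ξ : ℂ))) * h22
    have hφ01 : φ (0,1) = ((Real.cos θ * (Real.cos ξ - Real.sin ξ) / 2 : ℝ) : ℂ) := by
      rw [hφ]
      simp [krausM, projPlus, projMinus, ketPlus, ketMinus, Matrix.vecMulVec_apply,
        Matrix.mulVec, dotProduct, Fintype.sum_prod_type, Fin.sum_univ_two, psiState,
        Matrix.one_apply, Matrix.kroneckerMap_apply, Matrix.add_apply, Matrix.smul_apply,
        smul_eq_mul, Complex.conj_ofReal, map_inv₀, Pi.star_apply, Matrix.vecMulVec]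
      field_simp
      simp only [← Complex.ofReal_cos, ← Complex.ofReal_sin]
      linear_combination (-((Real.cos θ : ℂ)) * ((Real.cos ξ : ℂ) - (Real.sin ξ : ℂ))) * h22
    have hφ10 : φ (1,0) = ((Real.sin θ * (Real.cos ξ - Real.sin ξ) / 2 : ℝ) : ℂ) := by
      rw [hφ]
      simp [krausM, projPlus, projMinus, ketPlus, ketMinus, Matrix.vecMulVec_apply,
        Matrix.mulVec, dotProduct, Fintype.sum_prod_type, Fin.sum_univ_two, psiState,
        Matrix.one_apply, Matrix.kroneckerMap_apply, Matrix.add_apply, Matrix.smul_apply,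
        smul_eq_mul, Complex.conj_ofReal, map_inv₀, Pi.star_apply, Matrix.vecMulVec]
      field_simp
      simp only [← Complex.ofReal_cos, ← Complex.ofReal_sin]
      linear_combination (-((Real.sin θ : ℂ)) * ((Real.cos ξ : ℂ) - (Real.sin ξ : ℂ))) * h22
    have hφ11 : φ (1,1) = ((Real.sin θ * (Real.cos ξ + Real.sin ξ) / 2 : ℝ) : ℂ) := by
      rw [hφ]
      simp [krausM, projPlus, projMinus, ketPlus, ketMinus, Matrix.vecMulVec_apply,
        Matrix.mulVec, dotProduct, Fintype.sum_prod_type, Fin.sum_univ_two, psiState,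
        Matrix.one_apply, Matrix.kroneckerMap_apply, Matrix.add_apply, Matrix.smul_apply,
        smul_eq_mul, Complex.conj_ofReal, map_inv₀, Pi.star_apply, Matrix.vecMulVec]
      field_simp
      simp only [← Complex.ofReal_cos, ← Complex.ofReal_sin]
      linear_combination (-((Real.sin θ : ℂ)) * ((Real.cos ξ : ℂ) + (Real.sin ξ : ℂ))) * h22
    have hd : (Real.cos ξ - Real.sin ξ)^2 = 1 - 2 * Real.cos ξ * Real.sin ξ := by
      linear_combination h2
    have hre : (star φ ⬝ᵥ φ).re = 1/2 := by
      have hdot : star φ ⬝ᵥ φ = (((Real.cos θ * (Real.cos ξ + Real.sin ξ) / 2)^2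
          + (Real.cos θ * (Real.cos ξ - Real.sin ξ) / 2)^2
          + (Real.sin θ * (Real.cos ξ - Real.sin ξ) / 2)^2
          + (Real.sin θ * (Real.cos ξ + Real.sin ξ) / 2)^2 : ℝ) : ℂ) := by
        simp only [dotProduct, Fintype.sum_prod_type, Fin.sum_univ_two,
          Pi.star_apply, hφ00, hφ01, hφ10, hφ11, Complex.conj_ofReal, RCLike.star_def]
        push_cast
        ring
      rw [hdot, Complex.ofReal_re]
      linear_combination (((Real.cos ξ + Real.sin ξ)^2/4 + (Real.cos ξ - Real.sin ξ)^2/4)) * h1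
        + (1/2) * h2
    have hsc : ((Real.sqrt ((star φ ⬝ᵥ φ).re) : ℝ) : ℂ)⁻¹ = ((Real.sqrt 2 : ℝ) : ℂ) := by
      rw [hre, show (1/2 : ℝ) = 2⁻¹ by norm_num, Real.sqrt_inv, Complex.ofReal_inv, inv_inv]
    obtain ⟨U, V, θ', hU, hV, hmem, heq⟩ :=
      key_svd (Real.cos θ) (Real.sin θ) (Real.cos ξ) (Real.sin ξ)
        (Real.cos ξ - Real.sin ξ) φ hφ00 hφ01 hφ10 hφ11 h1 h2 hd hw0 hw1
    exact ⟨U, V, θ', hU, hV, hmem, by rw [hsc]; exact heq⟩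
  · -- b = -1
    have hφ00 : φ (0,0) = ((Real.cos θ * (Real.cos ξ + Real.sin ξ) / 2 : ℝ) : ℂ) := by
      rw [hφ]
      simp [krausM, projPlus, projMinus, ketPlus, ketMinus, Matrix.vecMulVec_apply,
        Matrix.mulVec, dotProduct, Fintype.sum_prod_type, Fin.sum_univ_two, psiState,
        Matrix.one_apply, Matrix.kroneckerMap_apply, Matrix.add_apply, Matrix.smul_apply,
        smul_eq_mul, Complex.conj_ofReal, map_inv₀, Pi.star_apply, Matrix.vecMulVec]
      field_simp
      simp only [← Complex.ofReal_cos, ← Complex.ofReal_sin]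
      linear_combination (-((Real.cos θ : ℂ)) * ((Real.cos ξ : ℂ) + (Real.sin ξ : ℂ))) * h22
    have hφ01 : φ (0,1) = ((Real.cos θ * (Real.sin ξ - Real.cos ξ) / 2 : ℝ) : ℂ) := by
      rw [hφ]
      simp [krausM, projPlus, projMinus, ketPlus, ketMinus, Matrix.vecMulVec_apply,
        Matrix.mulVec, dotProduct, Fintype.sum_prod_type, Fin.sum_univ_two, psiState,
        Matrix.one_apply, Matrix.kroneckerMap_apply, Matrix.add_apply, Matrix.smul_apply,
        smul_eq_mul, Complex.conj_ofReal, map_inv₀, Pi.star_apply, Matrix.vecMulVec]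
      field_simp
      simp only [← Complex.ofReal_cos, ← Complex.ofReal_sin]
      linear_combination (((Real.cos θ : ℂ)) * ((Real.cos ξ : ℂ) - (Real.sin ξ : ℂ))) * h22
    have hφ10 : φ (1,0) = ((Real.sin θ * (Real.sin ξ - Real.cos ξ) / 2 : ℝ) : ℂ) := by
      rw [hφ]
      simp [krausM, projPlus, projMinus, ketPlus, ketMinus, Matrix.vecMulVec_apply,
        Matrix.mulVec, dotProduct, Fintype.sum_prod_type, Fin.sum_univ_two, psiState,
        Matrix.one_apply, Matrix.kroneckerMap_apply, Matrix.add_apply, Matrix.smul_apply,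
        smul_eq_mul, Complex.conj_ofReal, map_inv₀, Pi.star_apply, Matrix.vecMulVec]
      field_simp
      simp only [← Complex.ofReal_cos, ← Complex.ofReal_sin]
      linear_combination (((Real.sin θ : ℂ)) * ((Real.cos ξ : ℂ) - (Real.sin ξ : ℂ))) * h22
    have hφ11 : φ (1,1) = ((Real.sin θ * (Real.cos ξ + Real.sin ξ) / 2 : ℝ) : ℂ) := by
      rw [hφ]
      simp [krausM, projPlus, projMinus, ketPlus, ketMinus, Matrix.vecMulVec_apply,
        Matrix.mulVec, dotProduct, Fintype.sum_prod_type, Fin.sum_univ_two, psiState,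
        Matrix.one_apply, Matrix.kroneckerMap_apply, Matrix.add_apply, Matrix.smul_apply,
        smul_eq_mul, Complex.conj_ofReal, map_inv₀, Pi.star_apply, Matrix.vecMulVec]
      field_simp
      simp only [← Complex.ofReal_cos, ← Complex.ofReal_sin]
      linear_combination (-((Real.sin θ : ℂ)) * ((Real.cos ξ : ℂ) + (Real.sin ξ : ℂ))) * h22
    have hd : (Real.sin ξ - Real.cos ξ)^2 = 1 - 2 * Real.cos ξ * Real.sin ξ := by
      linear_combination h2
    have hre : (star φ ⬝ᵥ φ).re = 1/2 := by
      have hdot : star φ ⬝ᵥ φ = (((Real.cos θ * (Real.cos ξ + Real.sin ξ) / 2)^2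
          + (Real.cos θ * (Real.sin ξ - Real.cos ξ) / 2)^2
          + (Real.sin θ * (Real.sin ξ - Real.cos ξ) / 2)^2
          + (Real.sin θ * (Real.cos ξ + Real.sin ξ) / 2)^2 : ℝ) : ℂ) := by
        simp only [dotProduct, Fintype.sum_prod_type, Fin.sum_univ_two,
          Pi.star_apply, hφ00, hφ01, hφ10, hφ11, Complex.conj_ofReal, RCLike.star_def]
        push_cast
        ring
      rw [hdot, Complex.ofReal_re]
      linear_combination (((Real.cos ξ + Real.sin ξ)^2/4 + (Real.sin ξ - Real.cos ξ)^2/4)) * h1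
        + (1/2) * h2
    have hsc : ((Real.sqrt ((star φ ⬝ᵥ φ).re) : ℝ) : ℂ)⁻¹ = ((Real.sqrt 2 : ℝ) : ℂ) := by
      rw [hre, show (1/2 : ℝ) = 2⁻¹ by norm_num, Real.sqrt_inv, Complex.ofReal_inv, inv_inv]
    obtain ⟨U, V, θ', hU, hV, hmem, heq⟩ :=
      key_svd (Real.cos θ) (Real.sin θ) (Real.cos ξ) (Real.sin ξ)
        (Real.sin ξ - Real.cos ξ) φ hφ00 hφ01 hφ10 hφ11 h1 h2 hd hw0 hw1
    exact ⟨U, V, θ', hU, hV, hmem, by rw [hsc]; exact heq⟩
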